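/- For indices i<j<k, the operators b_{ij}f = (s_{ij}f - f)/(x_i - x_j), where s_{ij} swaps variables x_i and x_j, satisfy the classical Yang-Baxter equation: [b_{12}, b_{13}] + [b_{12}, b_{23}] + [b_{13}, b_{23}] = 0 as operators on polynomials in x_1, x_2, x_3. -/
import Mathlib


open MvPolynomial

section Aux

variable {α : Type*} [DecidableEq α]

private lemma swapL1 (a b c : α) (hab : a ≠ b) (hac : a ≠ c) (hbc : b ≠ c) :
    (Equiv.swap a b : α → α) ∘ (Equiv.swap a c) = (Equiv.swap b c : α → α) ∘ (Equiv.swap a b) := by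
  have hba := hab.symm; have hca := hac.symm; have hcb := hbc.symm
  funext x
  by_cases hxa : x = a <;> by_cases hxb : x = b <;> by_cases hxc : x = c <;>
    simp_all [Equiv.swap_apply_def]

private lemma swapL2 (a b c : α) (hab : a ≠ b) (hac : a ≠ c) (hbc : b ≠ c) :
    (Equiv.swap a c : α → α) ∘ (Equiv.swap b c) = (Equiv.swap b c : α → α) ∘ (Equiv.swap a b) := by
  have hba := hab.symm; have hca := hac.symm; have hcb := hbc.symm
  funext x
  by_cases hxa : x = a <;> by_cases hxb : x = b <;> by_cases hxc : x = c <;>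
    simp_all [Equiv.swap_apply_def]

private lemma swapL3 (a b c : α) (hab : a ≠ b) (hac : a ≠ c) (hbc : b ≠ c) :
    (Equiv.swap a c : α → α) ∘ (Equiv.swap a b) = (Equiv.swap b c : α → α) ∘ (Equiv.swap a c) := by
  have hba := hab.symm; have hca := hac.symm; have hcb := hbc.symm
  funext x
  by_cases hxa : x = a <;> by_cases hxb : x = b <;> by_cases hxc : x = c <;>
    simp_all [Equiv.swap_apply_def]

private lemma swapL4 (a b c : α) (hab : a ≠ b) (hac : a ≠ c) (hbc : b ≠ c) :
    (Equiv.swap a b : α → α) ∘ (Equiv.swap b c) = (Equiv.swap b c : α → α) ∘ (Equiv.swap a c) := by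
  have hba := hab.symm; have hca := hac.symm; have hcb := hbc.symm
  funext x
  by_cases hxa : x = a <;> by_cases hxb : x = b <;> by_cases hxc : x = c <;>
    simp_all [Equiv.swap_apply_def]

end Aux

/-- The operators `b i j`, sending `f` to `(s_{ij} f - f)/(x_i - x_j)`
(characterized here by `(X i - X j) * b i j f = rename (swap i j) f - f`), satisfy the
classical Yang–Baxter equation `[b₁₂,b₁₃] + [b₁₂,b₂₃] + [b₁₃,b₂₃] = 0`. -/
theorem stmt0 (n : ℕ)
    (b : Fin n → Fin n → (MvPolynomial (Fin n) ℂ →ₗ[ℂ] MvPolynomial (Fin n) ℂ))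
    (hb : ∀ i j : Fin n, i ≠ j → ∀ f : MvPolynomial (Fin n) ℂ,
      (X i - X j) * b i j f = rename (Equiv.swap i j) f - f)
    (i j k : Fin n) (hij : i < j) (hjk : j < k) :
    (b i j ∘ₗ b i k - b i k ∘ₗ b i j)
      + (b i j ∘ₗ b j k - b j k ∘ₗ b i j)
      + (b i k ∘ₗ b j k - b j k ∘ₗ b i k) = 0 := by
  have hik : i < k := hij.trans hjk
  have hij' : i ≠ j := hij.ne
  have hik' : i ≠ k := hik.ne
  have hjk' : j ≠ k := hjk.ne
  apply LinearMap.ext; intro f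
  simp only [LinearMap.add_apply, LinearMap.sub_apply, LinearMap.comp_apply, LinearMap.zero_apply]
  set P : MvPolynomial (Fin n) ℂ := X i - X j with hP
  set Q : MvPolynomial (Fin n) ℂ := X i - X k with hQ
  set R : MvPolynomial (Fin n) ℂ := X j - X k with hR
  have hD : P * (Q * R) ≠ 0 := by
    have h1 : P ≠ 0 := sub_ne_zero.mpr fun h => hij' (X_injective h)
    have h2 : Q ≠ 0 := sub_ne_zero.mpr fun h => hik' (X_injective h)
    have h3 : R ≠ 0 := sub_ne_zero.mpr fun h => hjk' (X_injective h)
    exact mul_ne_zero h1 (mul_ne_zero h2 h3)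
  apply mul_left_cancel₀ hD
  -- primitive hypotheses
  have h1a := hb i j hij' (b i k f)
  have h1c := hb i k hik' f
  have h2a := hb i k hik' (b i j f)
  have h2c := hb i j hij' f
  have h3a := hb i j hij' (b j k f)
  have h3c := hb j k hjk' f
  have h4a := hb j k hjk' (b i j f)
  have h5a := hb i k hik' (b j k f)
  have h6a := hb j k hjk' (b i k f)
  -- renamed versions of the defining relation
  have h1b : R * rename (Equiv.swap i j) (b i k f)
      = rename (Equiv.swap i j) (rename (Equiv.swap i k) f) - rename (Equiv.swap i j) f := by
    have := congrArg (rename (Equiv.swap i j)) h1c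
    simpa [hR, map_mul, map_sub, rename_X, Equiv.swap_apply_left,
      Equiv.swap_apply_of_ne_of_ne hik'.symm hjk'.symm] using this
  have h2b : (X k - X j) * rename (Equiv.swap i k) (b i j f)
      = rename (Equiv.swap i k) (rename (Equiv.swap i j) f) - rename (Equiv.swap i k) f := by
    have := congrArg (rename (Equiv.swap i k)) h2c
    simpa [map_mul, map_sub, rename_X, Equiv.swap_apply_left,
      Equiv.swap_apply_of_ne_of_ne hij'.symm hjk'] using this
  have h3b : Q * rename (Equiv.swap i j) (b j k f)
      = rename (Equiv.swap i j) (rename (Equiv.swap j k) f) - rename (Equiv.swap i j) f := by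
    have := congrArg (rename (Equiv.swap i j)) h3c
    simpa [hQ, map_mul, map_sub, rename_X, Equiv.swap_apply_right,
      Equiv.swap_apply_of_ne_of_ne hik'.symm hjk'.symm] using this
  have h4b : Q * rename (Equiv.swap j k) (b i j f)
      = rename (Equiv.swap j k) (rename (Equiv.swap i j) f) - rename (Equiv.swap j k) f := by
    have := congrArg (rename (Equiv.swap j k)) h2c
    simpa [hQ, map_mul, map_sub, rename_X, Equiv.swap_apply_left,
      Equiv.swap_apply_of_ne_of_ne hij' hik'] using this
  have h5b : (X j - X i) * rename (Equiv.swap i k) (b j k f)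
      = rename (Equiv.swap i k) (rename (Equiv.swap j k) f) - rename (Equiv.swap i k) f := by
    have := congrArg (rename (Equiv.swap i k)) h3c
    simpa [map_mul, map_sub, rename_X, Equiv.swap_apply_right,
      Equiv.swap_apply_of_ne_of_ne hij'.symm hjk'] using this
  have h6b : P * rename (Equiv.swap j k) (b i k f)
      = rename (Equiv.swap j k) (rename (Equiv.swap i k) f) - rename (Equiv.swap j k) f := by
    have := congrArg (rename (Equiv.swap j k)) h1c
    simpa [hP, map_mul, map_sub, rename_X, Equiv.swap_apply_right,
      Equiv.swap_apply_of_ne_of_ne hij' hik'] using this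
  -- identifications of the double renames
  have eqA1 : rename (Equiv.swap i j) (rename (Equiv.swap i k) f)
      = rename (Equiv.swap j k) (rename (Equiv.swap i j) f) := by
    rw [rename_rename, rename_rename, swapL1 i j k hij' hik' hjk']
  have eqA3 : rename (Equiv.swap i k) (rename (Equiv.swap j k) f)
      = rename (Equiv.swap j k) (rename (Equiv.swap i j) f) := by
    rw [rename_rename, rename_rename, swapL2 i j k hij' hik' hjk']
  have eqB1 : rename (Equiv.swap i k) (rename (Equiv.swap i j) f)
      = rename (Equiv.swap j k) (rename (Equiv.swap i k) f) := by
    rw [rename_rename, rename_rename, swapL3 i j k hij' hik' hjk']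
  have eqB2 : rename (Equiv.swap i j) (rename (Equiv.swap j k) f)
      = rename (Equiv.swap j k) (rename (Equiv.swap i k) f) := by
    rw [rename_rename, rename_rename, swapL4 i j k hij' hik' hjk']
  linear_combination
    (Q * R) * h1a + Q * h1b - R * h1c
    - ((P * R) * h2a + (-P) * h2b - R * h2c)
    + ((Q * R) * h3a + R * h3b - Q * h3c)
    - ((P * Q) * h4a + P * h4b - Q * h2c)
    + ((P * R) * h5a + (-R) * h5b - P * h3c)
    - ((P * Q) * h6a + Q * h6b - P * h1c)
    + Q * eqA1 + (-R) * eqA3 + P * eqB1 + R * eqB2
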